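/- Let P be a nonconstant polynomial with complex coefficients, viewed as the map z ↦ P(z) on ℂ, and let K be a compact subset of ℂ. Then the preimage of the filling equals the filling of the preimage: P⁻¹(fill(K)) = fill(P⁻¹(K)). -/

import Mathlib

open Polynomial

/-- The *filling* of a set `X ⊆ ℂ`: the union of `X` with all bounded connected
components of `ℂ \ X`. -/
def fill (X : Set ℂ) : Set ℂ :=
  {z : ℂ | Bornology.IsBounded (connectedComponentIn Xᶜ z)}

open Set Bornology Filter in
/-- Properness: preimage of a bounded set under a nonconstant polynomial is bounded. -/
lemma poly_preimage_bounded (P : Polynomial ℂ) (hP : 0 < P.natDegree) {S : Set ℂ}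
    (hS : IsBounded S) : IsBounded ((fun z : ℂ => P.eval z) ⁻¹' S) := by
  have hdeg : 0 < P.degree := Polynomial.natDegree_pos_iff_degree_pos.mp hP
  have htends : Tendsto (fun z : ℂ => P.eval z) (cobounded ℂ) (cobounded ℂ) := by
    rw [← tendsto_norm_atTop_iff_cobounded]
    exact P.tendsto_norm_atTop hdeg tendsto_norm_cobounded_atTop
  rw [isBounded_def] at hS ⊢
  exact htends hS

open Set Bornology in
/-- Openness of the image of a connected component. -/
lemma poly_isOpenMap (P : Polynomial ℂ) (hP : 0 < P.natDegree) {s : Set ℂ} (hs : IsOpen s) :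
    IsOpen ((fun z : ℂ => P.eval z) '' s) := by
  have han : AnalyticOnNhd ℂ (fun z : ℂ => P.eval z) Set.univ :=
    AnalyticOnNhd.eval_polynomial P
  rcases han.is_constant_or_isOpen isPreconnected_univ with h | h
  · exfalso
    obtain ⟨w, hw⟩ := h
    have : P = Polynomial.C w := Polynomial.funext fun r => by
      simpa using hw r (Set.mem_univ r)
    rw [this] at hP
    simp at hP
  · exact h s (Set.subset_univ s) hs

open Set Bornology in
/-- Key: points of the closure of a component that lie in the open carrier set
are already in the component. -/
lemma mem_of_mem_closure_connectedComponentIn {F : Set ℂ} (hF : IsOpen F) {z w : ℂ}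
    (hw : w ∈ closure (connectedComponentIn F z)) (hwF : w ∈ F) :
    w ∈ connectedComponentIn F z := by
  have hnhds : connectedComponentIn F w ∈ nhds w :=
    connectedComponentIn_mem_nhds (hF.mem_nhds hwF)
  rcases mem_closure_iff_nhds.mp hw _ hnhds with ⟨y, hy1, hy2⟩
  have h1 := connectedComponentIn_eq hy1
  have h2 := connectedComponentIn_eq hy2
  rw [h2, ← h1]
  exact mem_connectedComponentIn hwF

/-- For a nonconstant polynomial `P` over `ℂ` and a compact set `K ⊆ ℂ`,
the preimage of the filling equals the filling of the preimage:
`P⁻¹(fill K) = fill (P⁻¹ K)`. -/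
theorem preimage_fill_eq_fill_preimage (P : Polynomial ℂ) (hP : 0 < P.natDegree)
    (K : Set ℂ) (hK : IsCompact K) :
    (fun z : ℂ => P.eval z) ⁻¹' (fill K) = fill ((fun z : ℂ => P.eval z) ⁻¹' K) := by
  classical
  set f : ℂ → ℂ := fun z => P.eval z with hf
  have hfc : Continuous f := P.continuous
  ext z
  simp only [Set.mem_preimage, fill, Set.mem_setOf_eq, ← Set.preimage_compl]
  set C : Set ℂ := connectedComponentIn (f ⁻¹' Kᶜ) z with hC
  set D : Set ℂ := connectedComponentIn Kᶜ (f z) with hD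
  by_cases hz : f z ∈ K
  · -- both components are empty
    have hC0 : C = ∅ := connectedComponentIn_eq_empty (by simpa using hz)
    have hD0 : D = ∅ := connectedComponentIn_eq_empty (by simpa using hz)
    rw [hC0, hD0]
  · have hzF : z ∈ f ⁻¹' Kᶜ := hz
    have himg : f '' C ⊆ D := by
      refine (hfc.image_connectedComponentIn_subset hzF).trans ?_
      exact connectedComponentIn_mono _ (Set.image_preimage_subset f Kᶜ)
    constructor
    · intro hDb
      have hsub : C ⊆ f ⁻¹' D := fun x hx =>
        himg (Set.mem_image_of_mem f hx)
      exact (poly_preimage_bounded P hP hDb).subset hsub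
    · intro hCb
      -- closure C is compact, so f '' closure C is compact
      have hcc : IsCompact (closure C) := Metric.isCompact_of_isClosed_isBounded isClosed_closure hCb.closure
      have hfcc : IsCompact (f '' closure C) := hcc.image hfc
      -- f '' C is open
      have hCopen : IsOpen C := (hK.isClosed.isOpen_compl.preimage hfc).connectedComponentIn
      have hUopen : IsOpen (f '' C) := poly_isOpenMap P hP hCopen
      -- D is contained in (f '' C) ∪ (closure (f '' C))ᶜ
      have hclos : closure (f '' C) ⊆ f '' closure C :=
        closure_minimal (Set.image_mono (f := f) subset_closure) hfcc.isClosed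
      have hDsub : D ⊆ f '' C ∪ (closure (f '' C))ᶜ := by
        intro w hw
        by_cases hwc : w ∈ closure (f '' C)
        · left
          rcases hclos hwc with ⟨x, hx1, rfl⟩
          have hxK : x ∈ f ⁻¹' Kᶜ := connectedComponentIn_subset Kᶜ (f z) hw
          have : x ∈ C := mem_of_mem_closure_connectedComponentIn
            (hK.isClosed.isOpen_compl.preimage hfc) hx1 hxK
          exact Set.mem_image_of_mem f this
        · right; exact hwc
      -- by connectedness, D ⊆ closure (f '' C)
      have hDpc : IsPreconnected D := isPreconnected_connectedComponentIn
      have hfzC : f z ∈ f '' C := Set.mem_image_of_mem f (mem_connectedComponentIn hzF)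
      have hfzD : f z ∈ D := mem_connectedComponentIn hz
      have hDU : (D ∩ f '' C).Nonempty := ⟨f z, hfzD, hfzC⟩
      have hfinal : D ⊆ closure (f '' C) := by
        by_contra hcon
        rcases Set.not_subset.mp hcon with ⟨w, hwD, hwc⟩
        rcases hDpc (f '' C) (closure (f '' C))ᶜ hUopen isClosed_closure.isOpen_compl
          hDsub hDU ⟨w, hwD, hwc⟩ with ⟨v, _, hv1, hv2⟩
        exact hv2 (subset_closure hv1)
      exact hfcc.isBounded.subset (hfinal.trans hclos)
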